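/- Let m ∈ ℂ*, λ ∈ ℂ, b(t) = λt + 1, and g(t) = g₂t² + g₁t + g₀. Consider the system m·x + b'·x − b·x' = g with x''' = 0 in the unknown polynomial x of degree ≤ 2. If m ∉ {λ, −λ} there is a unique solution. If m = λ, a solution exists iff g₂ = 0. If m = −λ, a solution exists iff m²g₀ + m·g₁ + g₂ = 0. -/

import Mathlib

open Polynomial

/-- `x` is a solution of the system `m·x + b'·x − b·x' = g`, `x''' = 0`
(i.e. `x` is a polynomial of degree at most 2). -/
def IsSol (m : ℂ) (b g x : Polynomial ℂ) : Prop :=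
  x.degree ≤ 2 ∧
    Polynomial.C m * x + (Polynomial.derivative b) * x - b * (Polynomial.derivative x) = g

lemma eq_three (p : Polynomial ℂ) (hp : p.degree ≤ 2) :
    p = C (p.coeff 2) * X^2 + C (p.coeff 1) * X + C (p.coeff 0) := by
  ext n
  match n with
  | 0 => simp
  | 1 => simp
  | 2 => simp
  | (n+3) =>
    rw [Polynomial.coeff_eq_zero_of_degree_lt (lt_of_le_of_lt hp (by exact_mod_cast by omega))]
    simp [Polynomial.coeff_X_pow]

lemma deg3 (a b c : ℂ) : (C a * X^2 + C b * X + C c).degree ≤ 2 := by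
  compute_degree

lemma canon_eq (A2 A1 A0 B2 B1 B0 : ℂ) :
    C A2 * X^2 + C A1 * X + C A0 = C B2 * X^2 + C B1 * X + C B0 ↔
      A2 = B2 ∧ A1 = B1 ∧ A0 = B0 := by
  constructor
  · intro h
    refine ⟨?_, ?_, ?_⟩
    · have := congrArg (fun p => Polynomial.coeff p 2) h; simpa using this
    · have := congrArg (fun p => Polynomial.coeff p 1) h; simpa using this
    · have := congrArg (fun p => Polynomial.coeff p 0) h; simpa using this
  · rintro ⟨rfl, rfl, rfl⟩; rfl

lemma sol_iff (m lam g0 g1 g2 a0 a1 a2 : ℂ) :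
    IsSol m (C lam * X + 1) (C g2 * X^2 + C g1 * X + C g0)
      (C a2 * X^2 + C a1 * X + C a0) ↔
    (m - lam) * a2 = g2 ∧ m * a1 - 2 * a2 = g1 ∧ (m + lam) * a0 - a1 = g0 := by
  unfold IsSol
  rw [and_iff_right (deg3 _ _ _)]
  have key : C m * (C a2 * X^2 + C a1 * X + C a0)
      + derivative (C lam * X + 1) * (C a2 * X^2 + C a1 * X + C a0)
      - (C lam * X + 1) * derivative (C a2 * X^2 + C a1 * X + C a0)
      = C ((m - lam) * a2) * X^2 + C (m * a1 - 2 * a2) * X + C ((m + lam) * a0 - a1) := by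
    simp only [derivative_add, derivative_mul, derivative_C, derivative_X, derivative_one,
      derivative_X_pow, map_mul, map_add, map_sub, map_ofNat]
    push_cast
    simp only [map_ofNat]
    ring
  rw [key, canon_eq]


/-- Lemma `third-der` ii): with `b(t) = λt + 1` (`λ ∈ ℂ`), `g = g₂t² + g₁t + g₀`, `m ≠ 0`:
if `m ∉ {λ, -λ}` the system has a unique solution; if `m = λ` a solution exists iff
`g₂ = 0`; if `m = -λ` a solution exists iff `m²g₀ + m g₁ + g₂ = 0`. -/
theorem stmt_6 (m lam g0 g1 g2 : ℂ) (hm : m ≠ 0) :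
    (m ≠ lam → m ≠ -lam →
      ∃! x : Polynomial ℂ, IsSol m (Polynomial.C lam * Polynomial.X + 1)
        (Polynomial.C g2 * Polynomial.X ^ 2 + Polynomial.C g1 * Polynomial.X
          + Polynomial.C g0) x) ∧
    (m = lam →
      ((∃ x : Polynomial ℂ, IsSol m (Polynomial.C lam * Polynomial.X + 1)
        (Polynomial.C g2 * Polynomial.X ^ 2 + Polynomial.C g1 * Polynomial.X
          + Polynomial.C g0) x) ↔ g2 = 0)) ∧
    (m = -lam →
      ((∃ x : Polynomial ℂ, IsSol m (Polynomial.C lam * Polynomial.X + 1)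
        (Polynomial.C g2 * Polynomial.X ^ 2 + Polynomial.C g1 * Polynomial.X
          + Polynomial.C g0) x) ↔ m ^ 2 * g0 + m * g1 + g2 = 0)) := by
  refine ⟨?_, ?_, ?_⟩
  · intro h1 h2
    have hml : m - lam ≠ 0 := sub_ne_zero.2 h1
    have hmpl : m + lam ≠ 0 := fun h0 => h2 (eq_neg_of_add_eq_zero_left h0)
    set a2 := g2 / (m - lam) with ha2
    set a1 := (g1 + 2 * a2) / m with ha1
    set a0 := (g0 + a1) / (m + lam) with ha0
    refine ⟨C a2 * X^2 + C a1 * X + C a0,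
      (sol_iff m lam g0 g1 g2 a0 a1 a2).2 ⟨by rw [ha2]; field_simp, by
        rw [ha1, ha2]; field_simp; ring, by rw [ha0, ha1, ha2]; field_simp; ring⟩, ?_⟩
    intro y hy
    have hrep := eq_three y hy.1
    have hy' : IsSol m (C lam * X + 1) (C g2 * X ^ 2 + C g1 * X + C g0)
        (C (y.coeff 2) * X ^ 2 + C (y.coeff 1) * X + C (y.coeff 0)) := by
      rw [← hrep]; exact hy
    rw [hrep]
    obtain ⟨e2, e1, e0⟩ := (sol_iff m lam g0 g1 g2 _ _ _).1 hy'
    have hb2 : y.coeff 2 = a2 := by rw [ha2]; field_simp; linear_combination e2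
    have hb1 : y.coeff 1 = a1 := by
      rw [ha1, ha2]; field_simp; linear_combination (m - lam) * e1 + 2 * e2
    have hb0 : y.coeff 0 = a0 := by
      rw [ha0, ← hb1]; field_simp; linear_combination e0
    rw [hb2, hb1, hb0]
  · intro h
    subst h
    constructor
    · rintro ⟨x, hx⟩
      have hrep := eq_three x hx.1
      have hx' : IsSol m (C m * X + 1) (C g2 * X ^ 2 + C g1 * X + C g0)
          (C (x.coeff 2) * X ^ 2 + C (x.coeff 1) * X + C (x.coeff 0)) := by
        rw [← hrep]; exact hx
      obtain ⟨e2, -, -⟩ := (sol_iff m m g0 g1 g2 _ _ _).1 hx'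
      simpa using e2.symm
    · intro hg2
      have h2m : m + m ≠ 0 := by
        intro h0; exact hm (by linear_combination h0 / 2)
      refine ⟨C 0 * X^2 + C (g1 / m) * X + C ((g0 + g1 / m) / (m + m)),
        (sol_iff m m g0 g1 g2 _ _ _).2 ⟨by simp [hg2], by field_simp; ring, by field_simp; ring⟩⟩
  · intro h
    have hl : lam = -m := by rw [h]; ring
    subst hl
    have h2m : m - -m ≠ 0 := by
      intro h0; exact hm (by linear_combination h0 / 2)
    have h2m' : m + m ≠ 0 := by
      intro h0; exact hm (by linear_combination h0 / 2)
    constructor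
    · rintro ⟨x, hx⟩
      have hrep := eq_three x hx.1
      have hx' : IsSol m (C (-m) * X + 1) (C g2 * X ^ 2 + C g1 * X + C g0)
          (C (x.coeff 2) * X ^ 2 + C (x.coeff 1) * X + C (x.coeff 0)) := by
        rw [← hrep]; exact hx
      obtain ⟨e2, e1, e0⟩ := (sol_iff m (-m) g0 g1 g2 _ _ _).1 hx'
      linear_combination -m^2 * e0 - m * e1 - e2
    · intro hc
      refine ⟨C (g2 / (m - -m)) * X^2 + C ((g1 + 2 * (g2 / (m - -m))) / m) * X + C 0,
        (sol_iff m (-m) g0 g1 g2 _ _ _).2 ⟨by field_simp, by field_simp; try ring, ?_⟩⟩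
      have : m - -m = m + m := by ring
      rw [this]
      field_simp
      linear_combination -2 * hc
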